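/- Let α, β : ℝ² → ℝ³ be smooth maps satisfying α_v − β_u = 2α × β and α_u + β_v = (2/√3) α × β. Define α̃ = −(1/2)α + (√3/2)β and β̃ = −(√3/2)α − (1/2)β. Then α̃_v = β̃_u and α̃_u + β̃_v = −(4/√3) α̃ × β̃; consequently any ε : ℝ² → ℝ³ with ε_u = α̃, ε_v = β̃ satisfies the Wente H-surface equation ε_{uu} + ε_{vv} = −(4/√3) ε_u × ε_v. -/

import Mathlib

noncomputable section

/-- The frame rotated through angle `2π/3`: `α̃ = −(1/2)α + (√3/2)β`. -/
def ta (α β : ℝ → ℝ → Fin 3 → ℝ) (u v : ℝ) : Fin 3 → ℝ :=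
  (-(1 / 2) : ℝ) • α u v + (Real.sqrt 3 / 2) • β u v

/-- The frame rotated through angle `2π/3`: `β̃ = −(√3/2)α − (1/2)β`. -/
def tb (α β : ℝ → ℝ → Fin 3 → ℝ) (u v : ℝ) : Fin 3 → ℝ :=
  (-(Real.sqrt 3 / 2)) • α u v - ((1 / 2) : ℝ) • β u v

/-- if `α, β : ℝ² → ℝ³` satisfy `α_v − β_u = 2 α × β` and
`α_u + β_v = (2/√3) α × β`, then `α̃ = −(1/2)α + (√3/2)β`,
`β̃ = −(√3/2)α − (1/2)β` satisfy `α̃_v = β̃_u` and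
`α̃_u + β̃_v = −(4/√3) α̃ × β̃`; consequently any `ε` with `ε_u = α̃`,
`ε_v = β̃` satisfies the Wente `H`-surface equation
`ε_{uu} + ε_{vv} = −(4/√3) ε_u × ε_v`. -/
theorem stmt_19 (α β αu αv βu βv : ℝ → ℝ → Fin 3 → ℝ)
    (hαu : ∀ u v, HasDerivAt (fun u' => α u' v) (αu u v) u)
    (hαv : ∀ u v, HasDerivAt (fun v' => α u v') (αv u v) v)
    (hβu : ∀ u v, HasDerivAt (fun u' => β u' v) (βu u v) u)
    (hβv : ∀ u v, HasDerivAt (fun v' => β u v') (βv u v) v)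
    (heq1 : ∀ u v, αv u v - βu u v = (2 : ℝ) • crossProduct (α u v) (β u v))
    (heq2 : ∀ u v,
      αu u v + βv u v = (2 / Real.sqrt 3) • crossProduct (α u v) (β u v)) :
    (∀ u v, deriv (fun v' => ta α β u v') v = deriv (fun u' => tb α β u' v) u) ∧
    (∀ u v,
      deriv (fun u' => ta α β u' v) u + deriv (fun v' => tb α β u v') v
        = (-(4 / Real.sqrt 3)) • crossProduct (ta α β u v) (tb α β u v)) ∧
    (∀ ε : ℝ → ℝ → Fin 3 → ℝ,
      (∀ u v, HasDerivAt (fun u' => ε u' v) (ta α β u v) u) →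
      (∀ u v, HasDerivAt (fun v' => ε u v') (tb α β u v) v) →
      ∀ u v,
        deriv (fun u' => deriv (fun u'' => ε u'' v) u') u
          + deriv (fun v' => deriv (fun v'' => ε u v'') v') v
          = (-(4 / Real.sqrt 3)) •
              crossProduct
                (deriv (fun u' => ε u' v) u) (deriv (fun v' => ε u v') v)) := by
  have hs0 : Real.sqrt 3 ≠ 0 := by positivity
  have hs : Real.sqrt 3 * Real.sqrt 3 = 3 := Real.mul_self_sqrt (by norm_num)
  set s := Real.sqrt 3 with hsdef
  -- derivatives of the rotated frame
  have htau : ∀ u v, HasDerivAt (fun u' => ta α β u' v)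
      ((-(1 / 2) : ℝ) • αu u v + (s / 2) • βu u v) u := fun u v =>
    ((hαu u v).const_smul (-(1 / 2) : ℝ)).add ((hβu u v).const_smul (s / 2))
  have htav : ∀ u v, HasDerivAt (fun v' => ta α β u v')
      ((-(1 / 2) : ℝ) • αv u v + (s / 2) • βv u v) v := fun u v =>
    ((hαv u v).const_smul (-(1 / 2) : ℝ)).add ((hβv u v).const_smul (s / 2))
  have htbu : ∀ u v, HasDerivAt (fun u' => tb α β u' v)
      ((-(s / 2)) • αu u v - ((1 / 2) : ℝ) • βu u v) u := fun u v =>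
    ((hαu u v).const_smul (-(s / 2))).sub ((hβu u v).const_smul ((1 / 2) : ℝ))
  have htbv : ∀ u v, HasDerivAt (fun v' => tb α β u v')
      ((-(s / 2)) • αv u v - ((1 / 2) : ℝ) • βv u v) v := fun u v =>
    ((hαv u v).const_smul (-(s / 2))).sub ((hβv u v).const_smul ((1 / 2) : ℝ))
  -- key algebraic identities
  have key1 : ∀ u v, (-(1 / 2) : ℝ) • αv u v + (s / 2) • βv u v
      = (-(s / 2)) • αu u v - ((1 / 2) : ℝ) • βu u v := by
    intro u v
    have h1 : αv u v = (2 : ℝ) • crossProduct (α u v) (β u v) + βu u v :=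
      sub_eq_iff_eq_add.mp (heq1 u v)
    have h2 : βv u v = (2 / s) • crossProduct (α u v) (β u v) - αu u v := by
      rw [← heq2 u v]; abel
    rw [h1, h2]
    match_scalars <;> field_simp <;> ring
  have key2 : ∀ u v,
      ((-(1 / 2) : ℝ) • αu u v + (s / 2) • βu u v)
        + ((-(s / 2)) • αv u v - ((1 / 2) : ℝ) • βv u v)
      = (-(4 / s)) • crossProduct (α u v) (β u v) := by
    intro u v
    have h1 : αv u v = (2 : ℝ) • crossProduct (α u v) (β u v) + βu u v :=
      sub_eq_iff_eq_add.mp (heq1 u v)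
    have h2 : βv u v = (2 / s) • crossProduct (α u v) (β u v) - αu u v := by
      rw [← heq2 u v]; abel
    rw [h1, h2]
    match_scalars <;> field_simp
    all_goals nlinarith [hs]
  -- the cross product of the rotated frame agrees with the original one
  have hX : ∀ u v, crossProduct (ta α β u v) (tb α β u v)
      = crossProduct (α u v) (β u v) := by
    intro u v
    simp only [ta, tb, map_add, map_smul, map_sub, LinearMap.add_apply,
      LinearMap.sub_apply, LinearMap.smul_apply, cross_self, smul_zero,
      ← cross_anticomm (α u v) (β u v)]
    match_scalars <;> field_simp <;> nlinarith [hs]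
  refine ⟨fun u v => ?_, fun u v => ?_, fun ε hεu hεv u v => ?_⟩
  · rw [(htav u v).deriv, (htbu u v).deriv]; exact key1 u v
  · rw [(htau u v).deriv, (htbv u v).deriv, hX u v]; exact key2 u v
  · have e1 : (fun u' => deriv (fun u'' => ε u'' v) u') = fun u' => ta α β u' v :=
      funext fun u' => (hεu u' v).deriv
    have e2 : (fun v' => deriv (fun v'' => ε u v'') v') = fun v' => tb α β u v' :=
      funext fun v' => (hεv u v').deriv
    rw [e1, e2, (hεu u v).deriv, (hεv u v).deriv, (htau u v).deriv,
      (htbv u v).deriv, hX u v]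
    exact key2 u v
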